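/- Let p be a prime, R a commutative ring of characteristic p, and φ : R → R an additive map satisfying φ(a^p · b) = a · φ(b) for all a, b ∈ R and φ(1) = 1 (a Frobenius splitting of R). Then R is reduced, i.e., it has no nonzero nilpotent elements. -/

import Mathlib

/-- A Frobenius split commutative ring of prime characteristic `p` is reduced. -/
theorem stmt_0 (p : ℕ) (hp : p.Prime) (R : Type*) [CommRing R] [CharP R p]
    (φ : R → R) (hadd : ∀ a b : R, φ (a + b) = φ a + φ b)
    (hfrob : ∀ a b : R, φ (a ^ p * b) = a * φ b) (hone : φ 1 = 1) :
    ∀ x : R, IsNilpotent x → x = 0 := by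
  have hzero : φ 0 = 0 := by
    have h := hadd 0 0
    rw [add_zero] at h
    exact left_eq_add.mp h
  have key : ∀ x : R, x ^ p = 0 → x = 0 := by
    intro x hx
    have : φ (x ^ p * 1) = x * φ 1 := hfrob x 1
    rw [hx, zero_mul, hzero, hone, mul_one] at this
    exact this.symm
  have step : ∀ k : ℕ, ∀ x : R, x ^ p ^ k = 0 → x = 0 := by
    intro k
    induction k with
    | zero => intro x hx; simpa using hx
    | succ n ih =>
      intro x hx
      apply ih
      apply key
      rw [← pow_mul, ← pow_succ, hx]
  rintro x ⟨n, hn⟩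
  apply step n
  have hle : n ≤ p ^ n := (Nat.lt_pow_self hp.one_lt : n < p ^ n).le
  calc x ^ p ^ n = x ^ n * x ^ (p ^ n - n) := by rw [← pow_add, Nat.add_sub_cancel' hle]
    _ = 0 := by rw [hn, zero_mul]
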